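/- arXiv:2402.15406 — 4 statements merged into one kernel-verified Lean document; each statement's English description precedes it below -/
import Mathlib

section
/- Let n be a positive natural number, let α ∈ (0,1) be such that ⌈(n+1)(1−α)⌉ ≤ n, and let S₁, …, Sₙ, S_{n+1} be independent and identically distributed real-valued random variables on a probability space. Define q̂ to be the ⌈(n+1)(1−α)⌉-th smallest value among S₁, …, Sₙ (equivalently, q̂ = inf{q ∈ ℝ : #{i ≤ n : Sᵢ ≤ q}/n ≥ ⌈(n+1)(1−α)⌉/n}). Then ℙ(S_{n+1} ≤ q̂) ≥ 1 − α. -/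
open MeasureTheory ProbabilityTheory
open scoped Classical ENNReal

namespace SplitConf
variable {ι : Type*} [Fintype ι]

noncomputable def cnt (v : ι → ℝ) (q : ℝ) : ℕ := (Finset.univ.filter (fun i => v i ≤ q)).card
noncomputable def scnt (v : ι → ℝ) (q : ℝ) : ℕ := (Finset.univ.filter (fun i => v i < q)).card
noncomputable def Qset (v : ι → ℝ) (k : ℕ) : Set ℝ := {q | k ≤ cnt v q}
noncomputable def tstat (v : ι → ℝ) (k : ℕ) : ℝ := sInf (Qset v k)

variable {v : ι → ℝ} {k : ℕ}

lemma Qset_nonempty (hk : k ≤ Fintype.card ι) (hk1 : 1 ≤ k) : (Qset v k).Nonempty := by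
  have hne : (Finset.univ : Finset ι).Nonempty := by
    rw [Finset.univ_nonempty_iff, ← Fintype.card_pos_iff]; omega
  refine ⟨Finset.univ.sup' hne v, ?_⟩
  have : (Finset.univ.filter (fun i => v i ≤ Finset.univ.sup' hne v)) = Finset.univ := by
    apply Finset.filter_true_of_mem
    intro i _; exact Finset.le_sup' v (Finset.mem_univ i)
  simp only [Qset, cnt, Set.mem_setOf_eq, this, Finset.card_univ]
  exact hk

lemma Qset_bddBelow (hk1 : 1 ≤ k) : BddBelow (Qset v k) := by
  rcases isEmpty_or_nonempty ι with h | h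
  · refine ⟨0, fun q hq => ?_⟩
    simp only [Qset, cnt, Set.mem_setOf_eq] at hq
    rw [Finset.univ_eq_empty, Finset.filter_empty, Finset.card_empty] at hq
    omega
  · have hne : (Finset.univ : Finset ι).Nonempty := Finset.univ_nonempty
    refine ⟨Finset.univ.inf' hne v, ?_⟩
    intro q hq
    simp only [Qset, cnt, Set.mem_setOf_eq] at hq
    have : (Finset.univ.filter (fun i => v i ≤ q)).Nonempty := by
      rw [← Finset.card_pos]; omega
    obtain ⟨i, hi⟩ := this
    rw [Finset.mem_filter] at hi
    exact le_trans (Finset.inf'_le v (Finset.mem_univ i)) hi.2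

lemma cnt_tstat (hk : k ≤ Fintype.card ι) (hk1 : 1 ≤ k) : k ≤ cnt v (tstat v k) := by
  by_contra hlt
  push_neg at hlt
  set t := tstat v k with ht
  have hB : (Finset.univ.filter (fun i => t < v i)).Nonempty := by
    by_contra hB
    rw [Finset.not_nonempty_iff_eq_empty, Finset.filter_eq_empty_iff] at hB
    have : (Finset.univ.filter (fun i => v i ≤ t)) = Finset.univ :=
      Finset.filter_true_of_mem (fun i _ => not_lt.1 (hB (Finset.mem_univ i)))
    simp only [cnt, this, Finset.card_univ] at hlt; omega
  set m := (Finset.univ.filter (fun i => t < v i)).inf' hB v with hm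
  have htm : t < m := by
    rw [hm, Finset.lt_inf'_iff]
    intro i hi; exact (Finset.mem_filter.1 hi).2
  have hmle : m ≤ t := by
    apply le_csInf (Qset_nonempty hk hk1)
    intro q hq
    have hqt : t ≤ q := csInf_le (Qset_bddBelow hk1) hq
    simp only [Qset, cnt, Set.mem_setOf_eq] at hq
    have : ∃ i, v i ≤ q ∧ t < v i := by
      by_contra hcon
      push_neg at hcon
      have hsub : (Finset.univ.filter (fun i => v i ≤ q)) ⊆
          (Finset.univ.filter (fun i => v i ≤ t)) := by
        intro i hi
        rw [Finset.mem_filter] at hi ⊢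
        exact ⟨hi.1, hcon i hi.2⟩
      have := Finset.card_le_card hsub
      simp only [cnt] at hlt; omega
    obtain ⟨i, hiq, hti⟩ := this
    calc m ≤ v i := Finset.inf'_le v (by simp [hti])
    _ ≤ q := hiq
  linarith

lemma le_tstat_iff (hk : k ≤ Fintype.card ι) (hk1 : 1 ≤ k) (s : ℝ) :
    s ≤ tstat v k ↔ scnt v s < k := by
  constructor
  · intro hst
    by_contra hge
    push_neg at hge
    have hC : (Finset.univ.filter (fun i => v i < s)).Nonempty := by
      rw [← Finset.card_pos]; simp only [scnt] at hge; omega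
    set m := (Finset.univ.filter (fun i => v i < s)).sup' hC v with hm
    have hms : m < s := by
      rw [hm, Finset.sup'_lt_iff]
      intro i hi; exact (Finset.mem_filter.1 hi).2
    have hmQ : m ∈ Qset v k := by
      simp only [Qset, Set.mem_setOf_eq]
      refine le_trans hge (Finset.card_le_card ?_)
      intro i hi
      rw [Finset.mem_filter] at hi ⊢
      exact ⟨hi.1, Finset.le_sup' v (by simp [hi.2])⟩
    have : tstat v k ≤ m := csInf_le (Qset_bddBelow hk1) hmQ
    linarith
  · intro hlt
    by_contra hst
    push_neg at hst
    have h1 := cnt_tstat (v := v) hk hk1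
    have hsub : (Finset.univ.filter (fun i => v i ≤ tstat v k)) ⊆
        (Finset.univ.filter (fun i => v i < s)) := by
      intro i hi
      rw [Finset.mem_filter] at hi ⊢
      exact ⟨hi.1, lt_of_le_of_lt hi.2 hst⟩
    have := Finset.card_le_card hsub
    simp only [cnt, scnt] at h1 hlt this; omega

/-- Pointwise: at least `k` indices have strict-rank `< k`. -/
lemma card_rank_lt (hk : k ≤ Fintype.card ι) (hk1 : 1 ≤ k) (x : ι → ℝ) :
    k ≤ (Finset.univ.filter (fun j => scnt x (x j) < k)).card := by
  refine le_trans (cnt_tstat (v := x) hk hk1) (Finset.card_le_card ?_)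
  intro j hj
  rw [Finset.mem_filter] at hj ⊢
  exact ⟨hj.1, (le_tstat_iff hk hk1 (x j)).1 hj.2⟩

lemma pi_map_comp (μ : Measure ℝ) [IsProbabilityMeasure μ] (m : ℕ) (e : Equiv.Perm (Fin m)) :
    (Measure.pi fun _ : Fin m => μ).map (fun x => x ∘ e) = Measure.pi fun _ : Fin m => μ := by
  have hco : (fun x : Fin m → ℝ => x ∘ e) =
      ⇑(MeasurableEquiv.piCongrLeft (fun _ : Fin m => ℝ) e.symm) := by
    funext x
    funext j
    have := MeasurableEquiv.piCongrLeft_apply_apply e.symm (β := fun _ : Fin m => ℝ) x (e j)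
    simpa using this.symm
  rw [hco]
  exact (measurePreserving_piCongrLeft (fun _ : Fin m => μ) e.symm).map_eq

lemma map_eq_pi {Ω : Type*} [MeasurableSpace Ω] (P : Measure Ω) [IsProbabilityMeasure P]
    {m : ℕ} (S : Fin m → Ω → ℝ) (hmeas : ∀ i, Measurable (S i))
    (hindep : iIndepFun S P)
    (μ : Measure ℝ) [IsProbabilityMeasure μ] (hμ : ∀ i, P.map (S i) = μ) :
    P.map (fun ω i => S i ω) = Measure.pi (fun _ : Fin m => μ) := by
  have hΦ : Measurable (fun ω i => S i ω) := measurable_pi_lambda _ hmeas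
  refine (Measure.pi_eq ?_).symm
  intro s hs
  rw [Measure.map_apply hΦ (MeasurableSet.univ_pi hs)]
  have hpre : (fun ω i => S i ω) ⁻¹' Set.pi Set.univ s = ⋂ i ∈ Finset.univ, S i ⁻¹' s i := by
    ext ω; simp [Set.mem_pi]
  rw [hpre, hindep.measure_inter_preimage_eq_mul Finset.univ (sets := s) (fun i _ => hs i)]
  refine Finset.prod_congr rfl (fun i _ => ?_)
  rw [← hμ i, Measure.map_apply (hmeas i) (hs i)]

lemma cnt_measurable {m : ℕ} (j : Fin m) (k : ℕ) :
    MeasurableSet {x : Fin m → ℝ | (Finset.univ.filter (fun i => x i < x j)).card < k} := by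
  have hmeas : Measurable (fun x : Fin m → ℝ =>
      (Finset.univ.filter (fun i => x i < x j)).card) := by
    have : (fun x : Fin m → ℝ => (Finset.univ.filter (fun i => x i < x j)).card) =
        fun x => ∑ i : Fin m, if x i < x j then 1 else 0 := by
      funext x; rw [Finset.card_filter]
    rw [this]
    refine Finset.measurable_sum _ (fun i _ => ?_)
    exact Measurable.ite (measurableSet_lt (measurable_pi_apply i) (measurable_pi_apply j))
      measurable_const measurable_const
  exact hmeas (MeasurableSet.of_discrete (s := {c : ℕ | c < k}))

/-- reindexing a filter-card along a permutation -/
lemma card_filter_comp {m : ℕ} (e : Equiv.Perm (Fin m)) (p : Fin m → Prop) :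
    (Finset.univ.filter (fun i => p (e i))).card = (Finset.univ.filter p).card := by
  refine Finset.card_bij' (fun i _ => e i) (fun i _ => e.symm i) ?_ ?_ ?_ ?_
  · intro i hi; rw [Finset.mem_filter] at hi ⊢; exact ⟨Finset.mem_univ _, hi.2⟩
  · intro i hi; rw [Finset.mem_filter] at hi ⊢
    refine ⟨Finset.mem_univ _, ?_⟩; simpa using hi.2
  · intro i _; simp
  · intro i _; simp

end SplitConf

/-- **Rank/quantile lemma underlying split conformal prediction.**
If `S 0, …, S n` are i.i.d. real-valued random variables, `0 < α < 1` with
`⌈(n+1)(1-α)⌉ ≤ n`, and `q̂` is the empirical `⌈(n+1)(1-α)⌉/n`-quantile of the first `n`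
variables, i.e. `q̂ = inf {q | #{i ≤ n : Sᵢ ≤ q}/n ≥ ⌈(n+1)(1-α)⌉/n}`, then
`P(S_{n+1} ≤ q̂) ≥ 1 - α`. -/
theorem split_conformal_rank_lemma
    {Ω : Type*} [MeasurableSpace Ω] (P : Measure Ω) [IsProbabilityMeasure P]
    (n : ℕ) (hn : 0 < n) (α : ℝ) (hα0 : 0 < α) (hα1 : α < 1)
    (hk : ⌈((n : ℝ) + 1) * (1 - α)⌉ ≤ (n : ℤ))
    (S : Fin (n + 1) → Ω → ℝ)
    (hSmeas : ∀ i, Measurable (S i))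
    (hindep : iIndepFun S P)
    (hident : ∀ i j, IdentDistrib (S i) (S j) P P)
    (qhat : Ω → ℝ)
    (hqhat : ∀ ω, qhat ω = sInf {q : ℝ |
      (⌈((n : ℝ) + 1) * (1 - α)⌉ : ℝ) / n ≤
        ((Finset.univ.filter (fun i : Fin n => S i.castSucc ω ≤ q)).card : ℝ) / n}) :
    ENNReal.ofReal (1 - α) ≤ P {ω | S (Fin.last n) ω ≤ qhat ω} := by
  classical
  set K : ℤ := ⌈((n : ℝ) + 1) * (1 - α)⌉ with hK
  have hKpos : 0 < K := Int.ceil_pos.2 (by nlinarith)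
  set k : ℕ := K.toNat with hkdef
  have hKk : (K : ℝ) = (k : ℝ) := by
    rw [hkdef]; exact_mod_cast (Int.toNat_of_nonneg hKpos.le).symm
  have hk1 : 1 ≤ k := by omega
  have hkn : k ≤ n := by omega
  have hnpos : (0 : ℝ) < n := by exact_mod_cast hn
  -- qhat is the order statistic
  have hqhat' : ∀ ω, qhat ω = SplitConf.tstat (fun i : Fin n => S i.castSucc ω) k := by
    intro ω
    rw [hqhat ω]
    congr 1
    ext q
    simp only [SplitConf.Qset, SplitConf.cnt, Set.mem_setOf_eq]
    rw [div_le_div_iff_of_pos_right hnpos, hKk, Nat.cast_le]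
  -- the event rewritten via ranks
  set Φ : Ω → (Fin (n + 1) → ℝ) := fun ω i => S i ω with hΦdef
  have hΦ : Measurable Φ := measurable_pi_lambda _ hSmeas
  set F : Fin (n + 1) → Set (Fin (n + 1) → ℝ) :=
    fun j => {x | (Finset.univ.filter (fun i => x i < x j)).card < k} with hFdef
  have hFmeas : ∀ j, MeasurableSet (F j) := fun j => SplitConf.cnt_measurable j k
  have hEvent : {ω | S (Fin.last n) ω ≤ qhat ω} = Φ ⁻¹' F (Fin.last n) := by
    ext ω
    simp only [Set.mem_setOf_eq, Set.mem_preimage, hFdef, hΦdef]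
    rw [hqhat' ω, SplitConf.le_tstat_iff (by simpa using hkn) hk1]
    have hcard : SplitConf.scnt (fun i : Fin n => S i.castSucc ω) (S (Fin.last n) ω) =
        (Finset.univ.filter (fun i : Fin (n + 1) => S i ω < S (Fin.last n) ω)).card := by
      simp only [SplitConf.scnt]
      rw [Finset.card_filter, Finset.card_filter, Fin.sum_univ_castSucc]
      simp
    rw [hcard]
  -- the joint distribution is a product measure
  set μ : Measure ℝ := P.map (S (Fin.last n)) with hμdef
  have : IsProbabilityMeasure μ := Measure.isProbabilityMeasure_map (hSmeas _).aemeasurable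
  have hμi : ∀ i, P.map (S i) = μ := fun i => (hident i (Fin.last n)).map_eq
  have hjoint : P.map Φ = Measure.pi (fun _ : Fin (n + 1) => μ) :=
    SplitConf.map_eq_pi P S hSmeas hindep μ hμi
  set π : Measure (Fin (n + 1) → ℝ) := Measure.pi (fun _ : Fin (n + 1) => μ) with hπdef
  -- all events F j have the same probability under π
  have hsame : ∀ j : Fin (n + 1), π (F j) = π (F (Fin.last n)) := by
    intro j
    set e : Equiv.Perm (Fin (n + 1)) := Equiv.swap j (Fin.last n) with hedef
    have hFe : F j = (fun x => x ∘ e) ⁻¹' F (Fin.last n) := by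
      ext x
      simp only [hFdef, Set.mem_setOf_eq, Set.mem_preimage, Function.comp]
      have h2 : (Finset.univ.filter (fun i => x (e i) < x (e (Fin.last n)))).card =
          (Finset.univ.filter (fun i => x i < x j)).card := by
        have h1 : e (Fin.last n) = j := by rw [hedef]; exact Equiv.swap_apply_right _ _
        rw [h1]
        exact SplitConf.card_filter_comp e (fun i => x i < x j)
      rw [h2]
    have hcomp : Measurable (fun x : Fin (n + 1) → ℝ => x ∘ e) :=
      measurable_pi_lambda _ (fun i => measurable_pi_apply _)
    rw [hFe, ← Measure.map_apply hcomp (hFmeas (Fin.last n)), hπdef,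
      SplitConf.pi_map_comp μ (n + 1) e]
  -- pointwise rank bound gives the sum bound
  have hsum : (k : ℝ≥0∞) ≤ ∑ j : Fin (n + 1), π (F j) := by
    have hlint : ∀ j : Fin (n + 1),
        π (F j) = ∫⁻ x, (F j).indicator (fun _ => (1 : ℝ≥0∞)) x ∂π := by
      intro j
      rw [lintegral_indicator (hFmeas j)]
      simp
    calc (k : ℝ≥0∞) = ∫⁻ _, (k : ℝ≥0∞) ∂π := by
          rw [lintegral_const, measure_univ, mul_one]
    _ ≤ ∫⁻ x, ∑ j : Fin (n + 1), (F j).indicator (fun _ => (1 : ℝ≥0∞)) x ∂π := by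
          apply lintegral_mono
          intro x
          have hT : (k : ℝ≥0∞) ≤
              ((Finset.univ.filter (fun j : Fin (n + 1) => x ∈ F j)).card : ℝ≥0∞) := by
            have := SplitConf.card_rank_lt (ι := Fin (n + 1)) (k := k)
              (by simp; omega) hk1 x
            have hTeq : (Finset.univ.filter (fun j : Fin (n + 1) => x ∈ F j)) =
                (Finset.univ.filter (fun j => SplitConf.scnt x (x j) < k)) := by
              apply Finset.filter_congr
              intro j _
              simp [hFdef, SplitConf.scnt]
            rw [hTeq]
            exact_mod_cast this
          refine le_trans hT ?_
          calc ((Finset.univ.filter (fun j : Fin (n + 1) => x ∈ F j)).card : ℝ≥0∞)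
              = ∑ _j ∈ Finset.univ.filter (fun j : Fin (n + 1) => x ∈ F j), (1 : ℝ≥0∞) := by
                rw [Finset.sum_const, nsmul_eq_mul, mul_one]
          _ = ∑ j ∈ Finset.univ.filter (fun j : Fin (n + 1) => x ∈ F j),
                  (F j).indicator (fun _ => (1 : ℝ≥0∞)) x :=
                Finset.sum_congr rfl (fun j hj =>
                  (Set.indicator_of_mem (Finset.mem_filter.1 hj).2 (fun _ => (1 : ℝ≥0∞))).symm)
          _ ≤ ∑ j : Fin (n + 1), (F j).indicator (fun _ => (1 : ℝ≥0∞)) x :=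
                Finset.sum_le_sum_of_subset (Finset.filter_subset _ _)
    _ = ∑ j : Fin (n + 1), π (F j) := by
          rw [lintegral_finset_sum]
          · exact Finset.sum_congr rfl (fun j _ => (hlint j).symm)
          · exact fun j _ => (measurable_const.indicator (hFmeas j))
  -- conclude
  set p : ℝ≥0∞ := π (F (Fin.last n)) with hpdef
  have hsum' : (k : ℝ≥0∞) ≤ ((n : ℝ≥0∞) + 1) * p := by
    refine le_trans hsum ?_
    rw [Finset.sum_congr rfl (fun j _ => hsame j), Finset.sum_const, Finset.card_univ,
      Fintype.card_fin, nsmul_eq_mul]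
    push_cast
    exact le_rfl
  have hpfin : p ≠ ⊤ := (measure_lt_top π _).ne
  have hple : p ≤ 1 := prob_le_one
  have hreal : (k : ℝ) ≤ ((n : ℝ) + 1) * p.toReal := by
    have hfin : ((n : ℝ≥0∞) + 1) * p ≠ ⊤ := by
      exact ENNReal.mul_ne_top (by simp) hpfin
    have := ENNReal.toReal_mono hfin hsum'
    rwa [ENNReal.toReal_natCast, ENNReal.toReal_mul, ENNReal.toReal_add (by simp) (by simp),
      ENNReal.toReal_natCast, ENNReal.toReal_one] at this
  have hfinal : 1 - α ≤ p.toReal := by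
    have hceil : ((n : ℝ) + 1) * (1 - α) ≤ (K : ℝ) := Int.le_ceil _
    rw [hKk] at hceil
    have hn1 : (0 : ℝ) < (n : ℝ) + 1 := by positivity
    nlinarith
  have : P {ω | S (Fin.last n) ω ≤ qhat ω} = p := by
    rw [hEvent, ← Measure.map_apply hΦ (hFmeas (Fin.last n)), hjoint, hpdef]
  rw [this, ← ENNReal.ofReal_toReal hpfin]
  exact ENNReal.ofReal_le_ofReal hfinal
end

section
/- Conformal calibration coverage guarantee. Let 𝒳 be a measurable space, let n be a positive natural number, let α ∈ (0,1) be such that ⌈(n+1)(1−α)⌉ ≤ n, and let (X₁,Y₁), …, (Xₙ,Yₙ), (X_test, Y_test) be independent and identically distributed random pairs taking values in 𝒳 × ℝ. Let s : 𝒳 × ℝ → ℝ be a measurable score function. Define q̂ = inf{q ∈ ℝ : #{i ≤ n : s(Xᵢ,Yᵢ) ≤ q}/n ≥ ⌈(n+1)(1−α)⌉/n}, and define the prediction set 𝒞(X_test) = {y ∈ ℝ : s(X_test, y) ≤ q̂}. Then ℙ(Y_test ∈ 𝒞(X_test)) ≥ 1 − α. -/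
open MeasureTheory ProbabilityTheory
open scoped Classical ENNReal

namespace ConformalAux

noncomputable def cnt {m : ℕ} (w : Fin m → ℝ) (q : ℝ) : ℕ :=
  (Finset.univ.filter (fun i => w i ≤ q)).card

lemma cnt_mono {m : ℕ} (w : Fin m → ℝ) {q q' : ℝ} (h : q ≤ q') : cnt w q ≤ cnt w q' := by
  apply Finset.card_le_card
  intro i hi
  simp only [Finset.mem_filter, Finset.mem_univ, true_and] at hi ⊢
  exact hi.trans h

lemma cnt_nonempty {m k : ℕ} (hkm : k ≤ m) (w : Fin m → ℝ) :
    {q : ℝ | k ≤ cnt w q}.Nonempty := by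
  rcases Nat.eq_zero_or_pos m with hm | hm
  · exact ⟨0, by simpa [cnt] using hkm.trans (by simp [hm])⟩
  obtain ⟨q₀, hq₀⟩ := Finite.exists_le w
  refine ⟨q₀, ?_⟩
  have : Finset.univ.filter (fun i => w i ≤ q₀) = Finset.univ := by
    ext i; simp [hq₀ i]
  simp [Set.mem_setOf_eq, cnt, this, hkm]

lemma cnt_bddBelow {m k : ℕ} (hk1 : 1 ≤ k) (w : Fin m → ℝ) :
    BddBelow {q : ℝ | k ≤ cnt w q} := by
  rcases Nat.eq_zero_or_pos m with hm | hm
  · refine ⟨0, fun q hq => ?_⟩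
    exfalso
    simp only [Set.mem_setOf_eq] at hq
    have hz : cnt w q = 0 := by subst hm; simp [cnt]
    omega
  have : Nonempty (Fin m) := ⟨⟨0, hm⟩⟩
  obtain ⟨b, hb⟩ := Finite.exists_le (fun i => -w i)
  refine ⟨-b, fun q hq => ?_⟩
  have hpos : 0 < cnt w q := lt_of_lt_of_le hk1 hq
  obtain ⟨i, hi⟩ := Finset.card_pos.1 hpos
  simp only [Finset.mem_filter, Finset.mem_univ, true_and] at hi
  have := hb i
  linarith

lemma cnt_sInf {m k : ℕ} (hk1 : 1 ≤ k) (hkm : k ≤ m) (w : Fin m → ℝ) :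
    k ≤ cnt w (sInf {q : ℝ | k ≤ cnt w q}) := by
  have hne := cnt_nonempty hkm w
  have hbdd := cnt_bddBelow (k := k) hk1 w
  set t := sInf {q : ℝ | k ≤ cnt w q} with ht
  by_contra hlt
  push_neg at hlt
  have hA : (Finset.univ.filter (fun i => t < w i)).Nonempty := by
    by_contra hA
    rw [Finset.not_nonempty_iff_eq_empty, Finset.filter_eq_empty_iff] at hA
    have : Finset.univ.filter (fun i => w i ≤ t) = Finset.univ := by
      ext i
      simp only [Finset.mem_filter, Finset.mem_univ, true_and, iff_true]
      have := hA (Finset.mem_univ i); push_neg at this; exact this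
    have : cnt w t = m := by simp [cnt, this]
    omega
  set wmin := (Finset.univ.filter (fun i => t < w i)).inf' hA w with hwmin
  have htw : t < wmin := by
    rw [hwmin, Finset.lt_inf'_iff]
    intro i hi
    simpa using (Finset.mem_filter.1 hi).2
  set c := (t + wmin) / 2 with hc
  have htc : t < c := by rw [hc]; linarith
  have hcw : c < wmin := by rw [hc]; linarith
  have hcc : cnt w c ≤ cnt w t := by
    apply Finset.card_le_card
    intro i hi
    simp only [Finset.mem_filter, Finset.mem_univ, true_and] at hi ⊢
    by_contra hwt
    push_neg at hwt
    have : wmin ≤ w i := Finset.inf'_le _ (by simp [hwt])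
    linarith
  obtain ⟨q, hq, hqc⟩ := (csInf_lt_iff hbdd hne).1 (ht ▸ htc)
  have : k ≤ cnt w c := le_trans hq (cnt_mono w hqc.le)
  omega

lemma cnt_perm {m : ℕ} (w : Fin m → ℝ) (σ : Equiv.Perm (Fin m)) (q : ℝ) :
    cnt (fun i => w (σ i)) q = cnt w q := by
  unfold cnt
  apply Finset.card_bij (fun i _ => σ i)
  · intro i hi; simp only [Finset.mem_filter, Finset.mem_univ, true_and] at hi ⊢; exact hi
  · intro a _ b _ h; exact σ.injective h
  · intro j hj
    refine ⟨σ.symm j, ?_, by simp⟩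
    simp only [Finset.mem_filter, Finset.mem_univ, true_and] at hj ⊢
    simpa using hj

end ConformalAux

open ConformalAux

/-- **Conformal calibration coverage guarantee (Theorem 3.1).**
Given i.i.d. pairs `(X₁,Y₁), …, (Xₙ,Yₙ), (X_test, Y_test)` in `𝒳 × ℝ`, a measurable score
function `s`, and the empirical quantile
`q̂ = inf {q | #{i ≤ n : s(Xᵢ,Yᵢ) ≤ q}/n ≥ ⌈(n+1)(1-α)⌉/n}` of the calibration scores,
the prediction set `𝒞(X_test) = {y | s(X_test, y) ≤ q̂}` satisfies
`ℙ(Y_test ∈ 𝒞(X_test)) ≥ 1 - α`. -/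
theorem conformal_calibration_coverage
    {Ω : Type*} [MeasurableSpace Ω] (P : Measure Ω) [IsProbabilityMeasure P]
    {𝒳 : Type*} [MeasurableSpace 𝒳]
    (n : ℕ) (hn : 0 < n) (α : ℝ) (hα0 : 0 < α) (hα1 : α < 1)
    (hk : ⌈((n : ℝ) + 1) * (1 - α)⌉ ≤ (n : ℤ))
    (Z : Fin (n + 1) → Ω → 𝒳 × ℝ)
    (hZmeas : ∀ i, Measurable (Z i))
    (hindep : iIndepFun Z P)
    (hident : ∀ i j, IdentDistrib (Z i) (Z j) P P)
    (s : 𝒳 × ℝ → ℝ) (hs : Measurable s)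
    (qhat : Ω → ℝ)
    (hqhat : ∀ ω, qhat ω = sInf {q : ℝ |
      (⌈((n : ℝ) + 1) * (1 - α)⌉ : ℝ) / n ≤
        ((Finset.univ.filter (fun i : Fin n => s (Z i.castSucc ω) ≤ q)).card : ℝ) / n})
    (C : Ω → Set ℝ)
    (hC : ∀ ω, C ω = {y : ℝ | s ((Z (Fin.last n) ω).1, y) ≤ qhat ω}) :
    ENNReal.ofReal (1 - α) ≤ P {ω | (Z (Fin.last n) ω).2 ∈ C ω} := by
  classical
  -- the integer level k
  set k : ℕ := (⌈((n : ℝ) + 1) * (1 - α)⌉).toNat with hkdef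
  have hprod_pos : 0 < ((n : ℝ) + 1) * (1 - α) := by
    apply mul_pos (by positivity) (by linarith)
  have hceil_pos : 0 < ⌈((n : ℝ) + 1) * (1 - α)⌉ := Int.ceil_pos.2 hprod_pos
  have hkcast : (k : ℤ) = ⌈((n : ℝ) + 1) * (1 - α)⌉ := Int.toNat_of_nonneg hceil_pos.le
  have hk1 : 1 ≤ k := by omega
  have hkn : k ≤ n := by omega
  have hkn1 : k ≤ n + 1 := by omega
  -- the joint law is a product measure
  set ν : Measure (𝒳 × ℝ) := P.map (Z 0) with hν
  haveI hνprob : IsProbabilityMeasure ν := Measure.isProbabilityMeasure_map (hZmeas 0).aemeasurable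
  set F : Ω → (Fin (n + 1) → 𝒳 × ℝ) := fun ω i => Z i ω with hF
  have hFmeas : Measurable F := measurable_pi_lambda _ hZmeas
  set μ : Measure (Fin (n + 1) → 𝒳 × ℝ) := P.map F with hμ
  haveI hμprob : IsProbabilityMeasure μ := Measure.isProbabilityMeasure_map hFmeas.aemeasurable
  have hμpi : μ = Measure.pi (fun _ => ν) := by
    symm
    refine Measure.pi_eq (fun t ht => ?_)
    rw [hμ, Measure.map_apply hFmeas (MeasurableSet.univ_pi ht)]
    have hpre : F ⁻¹' Set.pi Set.univ t = ⋂ i ∈ Finset.univ, Z i ⁻¹' (t i) := by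
      ext ω; simp [Set.mem_pi, hF]
    rw [hpre, hindep.measure_inter_preimage_eq_mul Finset.univ (fun i _ => ht i)]
    refine Finset.prod_congr rfl (fun i _ => ?_)
    rw [← Measure.map_apply (hZmeas i) (ht i), (hident i 0).map_eq, hν]
  -- the empirical quantile of all n+1 scores
  set T : (Fin (n + 1) → 𝒳 × ℝ) → ℝ :=
    fun v => sInf {q : ℝ | k ≤ cnt (fun i => s (v i)) q} with hT
  have hTmem : ∀ v, k ≤ cnt (fun i => s (v i)) (T v) :=
    fun v => cnt_sInf hk1 hkn1 _
  have hcntMeas : ∀ c : ℝ,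
      Measurable (fun v : Fin (n + 1) → 𝒳 × ℝ => cnt (fun i => s (v i)) c) := by
    intro c
    unfold cnt
    simp_rw [Finset.card_filter]
    apply Finset.measurable_sum
    intro i _
    exact Measurable.ite (measurableSet_le (hs.comp (measurable_pi_apply i)) measurable_const)
      measurable_const measurable_const
  have hTmeas : Measurable T := by
    apply measurable_of_Iic
    intro c
    have hiic : T ⁻¹' Set.Iic c = {v | k ≤ cnt (fun i => s (v i)) c} := by
      ext v
      simp only [Set.mem_preimage, Set.mem_Iic, Set.mem_setOf_eq]
      constructor
      · intro h; exact le_trans (hTmem v) (cnt_mono _ h)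
      · intro h; exact csInf_le (cnt_bddBelow hk1 _) h
    rw [hiic]
    exact (hcntMeas c) ((Set.to_countable {x : ℕ | k ≤ x}).measurableSet)
  -- the events
  set E : Fin (n + 1) → Set (Fin (n + 1) → 𝒳 × ℝ) := fun j => {v | s (v j) ≤ T v} with hE
  have hEmeas : ∀ j, MeasurableSet (E j) :=
    fun j => measurableSet_le (hs.comp (measurable_pi_apply j)) hTmeas
  -- permutation invariance of μ
  have hmap : ∀ σ : Equiv.Perm (Fin (n + 1)),
      Measure.map (fun (v : Fin (n + 1) → 𝒳 × ℝ) (i : Fin (n + 1)) => v (σ i)) μ = μ := by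
    intro σ
    have hg : Measurable (fun (v : Fin (n + 1) → 𝒳 × ℝ) (i : Fin (n + 1)) => v (σ i)) :=
      measurable_pi_lambda _ (fun i => measurable_pi_apply _)
    rw [hμpi]
    symm
    refine Measure.pi_eq (fun t ht => ?_)
    rw [Measure.map_apply hg (MeasurableSet.univ_pi ht)]
    have hpre : (fun (v : Fin (n + 1) → 𝒳 × ℝ) (i : Fin (n + 1)) => v (σ i)) ⁻¹'
        Set.pi Set.univ t = Set.pi Set.univ (fun j => t (σ.symm j)) := by
      ext v
      simp only [Set.mem_preimage, Set.mem_pi, Set.mem_univ, true_implies]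
      constructor
      · intro h j; have := h (σ.symm j); simpa using this
      · intro h i; simpa using h (σ i)
    rw [hpre, Measure.pi_pi]
    exact Equiv.prod_comp σ.symm (fun j => ν (t j))
  -- all events have the same probability
  have hEeq : ∀ j, μ (E j) = μ (E (Fin.last n)) := by
    intro j
    set σ := Equiv.swap j (Fin.last n) with hσ
    have hg : Measurable (fun (v : Fin (n + 1) → 𝒳 × ℝ) (i : Fin (n + 1)) => v (σ i)) :=
      measurable_pi_lambda _ (fun i => measurable_pi_apply _)
    have hpre : (fun (v : Fin (n + 1) → 𝒳 × ℝ) (i : Fin (n + 1)) => v (σ i)) ⁻¹'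
        (E (Fin.last n)) = E j := by
      ext v
      simp only [Set.mem_preimage, hE, Set.mem_setOf_eq]
      have h1 : v (σ (Fin.last n)) = v j := by rw [hσ, Equiv.swap_apply_right]
      have h2 : T (fun i => v (σ i)) = T v := by
        show sInf {q : ℝ | k ≤ cnt (fun i => s (v (σ i))) q}
            = sInf {q : ℝ | k ≤ cnt (fun i => s (v i)) q}
        congr 1
        ext q
        simp only [Set.mem_setOf_eq]
        rw [cnt_perm (fun i => s (v i)) σ q]
      rw [h1, h2]
    calc μ (E j) = μ ((fun (v : Fin (n + 1) → 𝒳 × ℝ) (i : Fin (n + 1)) => v (σ i)) ⁻¹'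
          (E (Fin.last n))) := by rw [hpre]
    _ = (Measure.map (fun (v : Fin (n + 1) → 𝒳 × ℝ) (i : Fin (n + 1)) => v (σ i)) μ)
          (E (Fin.last n)) := (Measure.map_apply hg (hEmeas _)).symm
    _ = μ (E (Fin.last n)) := by rw [hmap]
  -- the counting bound
  have hsum : (k : ℝ≥0∞) ≤ ∑ j : Fin (n + 1), μ (E j) := by
    have hpt : ∀ v, (k : ℝ≥0∞) ≤
        ∑ j : Fin (n + 1), (E j).indicator (fun _ => (1 : ℝ≥0∞)) v := by
      intro v
      have hcard : k ≤ (Finset.univ.filter (fun j : Fin (n + 1) => s (v j) ≤ T v)).card :=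
        hTmem v
      calc (k : ℝ≥0∞)
          ≤ ((Finset.univ.filter (fun j : Fin (n + 1) => s (v j) ≤ T v)).card : ℝ≥0∞) := by
            exact_mod_cast hcard
        _ = ∑ j : Fin (n + 1), (E j).indicator (fun _ => (1 : ℝ≥0∞)) v := by
            rw [Finset.card_filter]
            push_cast
            refine Finset.sum_congr rfl (fun j _ => ?_)
            by_cases hj : s (v j) ≤ T v <;> simp [Set.indicator, hE, hj]
    calc (k : ℝ≥0∞) = ∫⁻ _, (k : ℝ≥0∞) ∂μ := by simp
    _ ≤ ∫⁻ v, ∑ j : Fin (n + 1), (E j).indicator (fun _ => (1 : ℝ≥0∞)) v ∂μ :=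
        lintegral_mono hpt
    _ = ∑ j : Fin (n + 1), ∫⁻ v, (E j).indicator (fun _ => (1 : ℝ≥0∞)) v ∂μ :=
        lintegral_finset_sum _ (fun j _ => measurable_const.indicator (hEmeas j))
    _ = ∑ j : Fin (n + 1), μ (E j) := by
        refine Finset.sum_congr rfl (fun j _ => ?_)
        exact lintegral_indicator_one (hEmeas j)
  have hsum' : (k : ℝ≥0∞) ≤ ((n : ℝ≥0∞) + 1) * μ (E (Fin.last n)) := by
    rw [Finset.sum_congr rfl (fun j _ => hEeq j), Finset.sum_const, Finset.card_univ,
      Fintype.card_fin, nsmul_eq_mul] at hsum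
    convert hsum using 2
    push_cast
    ring
  -- lower bound for the last event
  have hlow : ENNReal.ofReal (1 - α) ≤ μ (E (Fin.last n)) := by
    have h1 : ENNReal.ofReal (1 - α) * ((n : ℝ≥0∞) + 1) ≤ (k : ℝ≥0∞) := by
      have he : ENNReal.ofReal (1 - α) * ((n : ℝ≥0∞) + 1)
          = ENNReal.ofReal ((1 - α) * ((n : ℝ) + 1)) := by
        rw [ENNReal.ofReal_mul (by linarith)]
        congr 1
        rw [ENNReal.ofReal_add (by positivity) zero_le_one]
        simp
      rw [he]
      have hle : (1 - α) * ((n : ℝ) + 1) ≤ (k : ℝ) := by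
        have := Int.le_ceil (((n : ℝ) + 1) * (1 - α))
        have hck : ((⌈((n : ℝ) + 1) * (1 - α)⌉ : ℤ) : ℝ) = (k : ℝ) := by
          exact_mod_cast congrArg (fun z : ℤ => (z : ℝ)) hkcast.symm
        nlinarith
      calc ENNReal.ofReal ((1 - α) * ((n : ℝ) + 1)) ≤ ENNReal.ofReal (k : ℝ) :=
          ENNReal.ofReal_le_ofReal hle
      _ = (k : ℝ≥0∞) := ENNReal.ofReal_natCast k
    have hc0 : ((n : ℝ≥0∞) + 1) ≠ 0 := by simp
    have hctop : ((n : ℝ≥0∞) + 1) ≠ ⊤ := by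
      simp [ENNReal.add_ne_top]
    have h2 : ((n : ℝ≥0∞) + 1) * ENNReal.ofReal (1 - α)
        ≤ ((n : ℝ≥0∞) + 1) * μ (E (Fin.last n)) := by
      rw [mul_comm ((n : ℝ≥0∞) + 1)]
      exact le_trans h1 hsum'
    exact (ENNReal.mul_le_mul_iff_right hc0 hctop).1 h2
  -- transfer to Ω and conclude
  have hPmap : P {ω | F ω ∈ E (Fin.last n)} = μ (E (Fin.last n)) := by
    rw [hμ, Measure.map_apply hFmeas (hEmeas _)]
    rfl
  refine le_trans hlow ?_
  rw [← hPmap]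
  apply measure_mono
  intro ω hω
  simp only [Set.mem_setOf_eq, hE] at hω
  show (Z (Fin.last n) ω).2 ∈ C ω
  rw [hC ω]
  simp only [Set.mem_setOf_eq]
  have hT_le : T (F ω) ≤ qhat ω := by
    rw [hqhat]
    have hset : {q : ℝ | (⌈((n : ℝ) + 1) * (1 - α)⌉ : ℝ) / n ≤
        ((Finset.univ.filter (fun i : Fin n => s (Z i.castSucc ω) ≤ q)).card : ℝ) / n}
        = {q : ℝ | k ≤ cnt (fun i : Fin n => s (Z i.castSucc ω)) q} := by
      ext q
      simp only [Set.mem_setOf_eq]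
      rw [div_le_div_iff_of_pos_right (by exact_mod_cast hn)]
      constructor
      · intro h
        have : (k : ℝ) ≤ ((Finset.univ.filter
            (fun i : Fin n => s (Z i.castSucc ω) ≤ q)).card : ℝ) := by
          calc (k : ℝ) = ((⌈((n : ℝ) + 1) * (1 - α)⌉ : ℤ) : ℝ) := by exact_mod_cast hkcast
          _ ≤ _ := h
        exact_mod_cast this
      · intro h
        calc (⌈((n : ℝ) + 1) * (1 - α)⌉ : ℝ) = (k : ℝ) := by exact_mod_cast hkcast.symm
        _ ≤ _ := by exact_mod_cast h
    rw [hset, hT]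
    apply csInf_le_csInf (cnt_bddBelow hk1 _) (cnt_nonempty hkn _)
    intro q hq
    simp only [Set.mem_setOf_eq] at hq ⊢
    refine le_trans hq ?_
    unfold cnt
    apply Finset.card_le_card_of_injOn (fun i => Fin.castSucc i)
    · intro i hi
      simp only [Finset.mem_coe, Finset.mem_filter, Finset.mem_univ, true_and] at hi ⊢
      exact hi
    · intro a _ b _ h
      exact Fin.castSucc_injective _ h
  exact le_trans hω hT_le
end

section
/- Exchangeable version of the conformal coverage guarantee. Let n be a positive natural number, let α ∈ (0,1) be such that ⌈(n+1)(1−α)⌉ ≤ n, and let S₁, …, Sₙ, S_{n+1} be real-valued random variables on a probability space whose joint distribution is exchangeable, i.e., for every permutation π of {1, …, n+1} the random vector (S_{π(1)}, …, S_{π(n+1)}) has the same law as (S₁, …, S_{n+1}). Define q̂ to be the ⌈(n+1)(1−α)⌉-th smallest value among S₁, …, Sₙ. Then ℙ(S_{n+1} ≤ q̂) ≥ 1 − α. -/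
open MeasureTheory ProbabilityTheory
open scoped Classical ENNReal

/-- The `k`-th smallest value (order statistic of rank `k`, 1-indexed) of a list of reals. -/
noncomputable def kthSmallest (l : List ℝ) (k : ℕ) : ℝ :=
  (l.mergeSort (fun a b => a ≤ b)).getD (k - 1) 0


lemma mem_take_le (s : List ℝ) (hs : s.Pairwise (· ≤ ·)) {k : ℕ} (hk1 : 0 < k) (hkn : k ≤ s.length)
    {a : ℝ} (ha : a ∈ s.take k) : a ≤ s[k-1]'(by omega) := by
  obtain ⟨i, hi, rfl⟩ := List.mem_iff_getElem.1 ha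
  rw [List.getElem_take]
  have hi' : i < k := by rw [List.length_take] at hi; omega
  have : s.get ⟨i, by omega⟩ ≤ s.get ⟨k-1, by omega⟩ := by
    apply hs.rel_get_of_le
    simp [Fin.le_def]; omega
  simpa using this

lemma drop_ge (s : List ℝ) (hs : s.Pairwise (· ≤ ·)) {k : ℕ} (hk1 : 0 < k) (hkn : k ≤ s.length)
    {a : ℝ} (ha : a ∈ s.drop (k-1)) : s[k-1]'(by omega) ≤ a := by
  have hidx : k - 1 < s.length := by omega
  have hp : List.Pairwise (· ≤ ·) (s.drop (k-1)) := List.Pairwise.drop hs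
  rw [List.drop_eq_getElem_cons hidx] at hp ha
  rcases List.mem_cons.1 ha with rfl | h
  · exact le_refl _
  · exact (List.pairwise_cons.1 hp).1 _ h

lemma sorted_le_getD_iff (s : List ℝ) (hs : s.Pairwise (· ≤ ·)) {k : ℕ} (hk1 : 0 < k)
    (hkn : k ≤ s.length) (x : ℝ) :
    x ≤ s.getD (k-1) 0 ↔ s.countP (fun a => decide (a < x)) < k := by
  have hidx : k - 1 < s.length := by omega
  rw [List.getD_eq_getElem s 0 hidx]
  constructor
  · intro hx
    have hsplit : s.countP (fun a => decide (a < x)) =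
        (s.take (k-1)).countP (fun a => decide (a < x)) +
        (s.drop (k-1)).countP (fun a => decide (a < x)) := by
      rw [← List.countP_append, List.take_append_drop]
    have h1 : (s.take (k-1)).countP (fun a => decide (a < x)) ≤ k - 1 :=
      le_trans (List.countP_le_length) (by simp [List.length_take])
    have h2 : (s.drop (k-1)).countP (fun a => decide (a < x)) = 0 := by
      rw [List.countP_eq_zero]
      intro a ha
      have := drop_ge s hs hk1 hkn ha
      simp only [decide_eq_true_eq]
      linarith
    omega
  · intro hc
    by_contra hx
    push_neg at hx
    have hsplit : s.countP (fun a => decide (a < x)) =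
        (s.take k).countP (fun a => decide (a < x)) +
        (s.drop k).countP (fun a => decide (a < x)) := by
      rw [← List.countP_append, List.take_append_drop]
    have h1 : (s.take k).countP (fun a => decide (a < x)) = k := by
      rw [List.countP_eq_length.2, List.length_take]
      · omega
      · intro a ha
        have := mem_take_le s hs hk1 hkn ha
        simp only [decide_eq_true_eq]
        linarith
    omega

lemma sorted_count_le (s : List ℝ) (hs : s.Pairwise (· ≤ ·)) {k : ℕ} (hk1 : 0 < k)
    (hkn : k ≤ s.length) :
    k ≤ s.countP (fun a => decide (a ≤ s.getD (k-1) 0)) := by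
  have hidx : k - 1 < s.length := by omega
  rw [List.getD_eq_getElem s 0 hidx]
  have hsplit : s.countP (fun a => decide (a ≤ s[k-1])) =
      (s.take k).countP (fun a => decide (a ≤ s[k-1])) +
      (s.drop k).countP (fun a => decide (a ≤ s[k-1])) := by
    rw [← List.countP_append, List.take_append_drop]
  have h1 : (s.take k).countP (fun a => decide (a ≤ s[k-1])) = k := by
    rw [List.countP_eq_length.2, List.length_take]
    · omega
    · intro a ha
      simpa using mem_take_le s hs hk1 hkn ha
  omega

lemma countP_ofFn {m : ℕ} (f : Fin m → ℝ) (p : ℝ → Bool) :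
    (List.ofFn f).countP p = (Finset.univ.filter (fun i => p (f i))).card := by
  induction m with
  | zero => simp
  | succ m ih =>
      rw [List.ofFn_succ, List.countP_cons, ih]
      rw [Finset.card_filter, Finset.card_filter, Fin.sum_univ_succ]
      simp [add_comm]

lemma sorted_mergeSort_real (l : List ℝ) :
    (l.mergeSort (fun a b => a ≤ b)).Pairwise (· ≤ ·) := by
  have h := List.pairwise_mergeSort (le := fun a b : ℝ => decide (a ≤ b))
    (fun a b c hab hbc => by simp_all; linarith)
    (fun a b => by simp [le_total]) l
  exact h.imp (fun h => by simpa using h)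

lemma counting_lemma {m : ℕ} (x : Fin m → ℝ) {k : ℕ} (hk1 : 0 < k) (hkm : k ≤ m) :
    k ≤ (Finset.univ.filter fun j =>
        (Finset.univ.filter fun i => x i < x j).card < k).card := by
  set l := List.ofFn x with hl
  set s := l.mergeSort (fun a b => a ≤ b) with hsdef
  have hperm : s.Perm l := List.mergeSort_perm l _
  have hlen : s.length = m := by rw [hperm.length_eq, hl, List.length_ofFn]
  have hs : s.Pairwise (· ≤ ·) := sorted_mergeSort_real l
  set t := s.getD (k-1) 0 with ht
  have hA : k ≤ (Finset.univ.filter fun j => x j ≤ t).card := by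
    have := sorted_count_le s hs hk1 (by omega)
    rw [hperm.countP_eq] at this
    rw [hl, countP_ofFn] at this
    simpa only [decide_eq_true_eq] using this
  refine le_trans hA (Finset.card_le_card ?_)
  intro j hj
  rw [Finset.mem_filter] at hj ⊢
  refine ⟨Finset.mem_univ _, ?_⟩
  have hjt : x j ≤ t := hj.2
  have hcount : (Finset.univ.filter fun i => x i < x j).card =
      l.countP (fun a => decide (a < x j)) := by
    rw [hl, countP_ofFn]; simp
  rw [hcount]
  have hmono : l.countP (fun a => decide (a < x j)) ≤ l.countP (fun a => decide (a < t)) :=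
    List.countP_mono_left (fun a _ h => by simp_all; linarith)
  have hlt : s.countP (fun a => decide (a < t)) < k :=
    (sorted_le_getD_iff s hs hk1 (by omega) t).1 (le_refl t)
  rw [hperm.countP_eq] at hlt
  omega


/-- **Exchangeable version of the conformal coverage guarantee.**
If the joint distribution of `S 0, …, S n` is exchangeable (invariant in law under every
permutation of the indices), `0 < α < 1` with `⌈(n+1)(1-α)⌉ ≤ n`, and `q̂` is the
`⌈(n+1)(1-α)⌉`-th smallest value among the first `n` variables, then
`ℙ(S_{n+1} ≤ q̂) ≥ 1 - α`. -/
theorem conformal_coverage_exchangeable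
    {Ω : Type*} [MeasurableSpace Ω] (P : Measure Ω) [IsProbabilityMeasure P]
    (n : ℕ) (hn : 0 < n) (α : ℝ) (hα0 : 0 < α) (hα1 : α < 1)
    (hk : ⌈((n : ℝ) + 1) * (1 - α)⌉ ≤ (n : ℤ))
    (S : Fin (n + 1) → Ω → ℝ)
    (hSmeas : ∀ i, Measurable (S i))
    (hexch : ∀ π : Equiv.Perm (Fin (n + 1)),
      IdentDistrib (fun ω => fun i => S (π i) ω) (fun ω => fun i => S i ω) P P)
    (qhat : Ω → ℝ)
    (hqhat : ∀ ω, qhat ω =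
      kthSmallest (List.ofFn (fun i : Fin n => S i.castSucc ω))
        (⌈((n : ℝ) + 1) * (1 - α)⌉.toNat)) :
    ENNReal.ofReal (1 - α) ≤ P {ω | S (Fin.last n) ω ≤ qhat ω} := by
  set k : ℕ := (⌈((n : ℝ) + 1) * (1 - α)⌉).toNat with hkdef
  have hceil_pos : 0 < ⌈((n : ℝ) + 1) * (1 - α)⌉ := by
    apply Int.ceil_pos.2
    have h1 : (0:ℝ) < (n:ℝ) + 1 := by positivity
    nlinarith
  have hk1 : 0 < k := by omega
  have hkn : k ≤ n := by omega
  -- the event in terms of rank counts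
  have hevent : ∀ ω, S (Fin.last n) ω ≤ qhat ω ↔
      (Finset.univ.filter fun i : Fin (n+1) => S i ω < S (Fin.last n) ω).card < k := by
    intro ω
    rw [hqhat ω]
    unfold kthSmallest
    set l := List.ofFn (fun i : Fin n => S i.castSucc ω) with hl
    set s := l.mergeSort (fun a b => a ≤ b) with hsdef
    have hperm : s.Perm l := List.mergeSort_perm l _
    have hlen : s.length = n := by rw [hperm.length_eq, hl, List.length_ofFn]
    have hs : s.Pairwise (· ≤ ·) := sorted_mergeSort_real l
    rw [sorted_le_getD_iff s hs hk1 (by omega)]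
    rw [hperm.countP_eq, hl, countP_ofFn]
    have hcards : (Finset.univ.filter fun i : Fin (n+1) => S i ω < S (Fin.last n) ω).card =
        (Finset.univ.filter fun i : Fin n =>
          decide (S i.castSucc ω < S (Fin.last n) ω) = true).card := by
      rw [Finset.card_filter, Finset.card_filter, Fin.sum_univ_castSucc]
      simp
    rw [hcards]
  -- measurable sets in the path space
  have hCmeas : ∀ j : Fin (n+1), MeasurableSet
      {f : Fin (n+1) → ℝ | (Finset.univ.filter fun i => f i < f j).card < k} := by
    intro j
    have hmeas : Measurable fun f : Fin (n+1) → ℝ =>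
        (Finset.univ.filter fun i => f i < f j).card := by
      have : (fun f : Fin (n+1) → ℝ => (Finset.univ.filter fun i => f i < f j).card)
          = fun f => ∑ i : Fin (n+1), if f i < f j then 1 else 0 := by
        funext f; rw [Finset.card_filter]
      rw [this]
      apply Finset.measurable_sum
      intro i _
      exact Measurable.ite (measurableSet_lt (measurable_pi_apply i) (measurable_pi_apply j))
        measurable_const measurable_const
    exact hmeas measurableSet_Iio
  set X : Ω → (Fin (n+1) → ℝ) := fun ω i => S i ω with hX
  have hXmeas : Measurable X := measurable_pi_lambda _ hSmeas
  set B : Fin (n+1) → Set Ω := fun j =>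
    {ω | (Finset.univ.filter fun i => S i ω < S j ω).card < k} with hB
  have hBmeas : ∀ j, MeasurableSet (B j) := by
    intro j
    have : B j = X ⁻¹' {f | (Finset.univ.filter fun i => f i < f j).card < k} := rfl
    rw [this]
    exact hXmeas (hCmeas j)
  -- all B j have the same probability
  have hBeq : ∀ j, P (B j) = P (B (Fin.last n)) := by
    intro j
    set π : Equiv.Perm (Fin (n+1)) := Equiv.swap (Fin.last n) j with hπ
    have h := (hexch π).measure_mem_eq (hCmeas (Fin.last n))
    have hπlast : π (Fin.last n) = j := Equiv.swap_apply_left _ _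
    have hL : (fun ω => fun i => S (π i) ω) ⁻¹'
        {f | (Finset.univ.filter fun i => f i < f (Fin.last n)).card < k} = B j := by
      ext ω
      simp only [Set.mem_preimage, Set.mem_setOf_eq, hB, hπlast]
      constructor <;> intro h' <;>
      · have hcard : (Finset.univ.filter fun i => S (π i) ω < S j ω).card =
            (Finset.univ.filter fun i => S i ω < S j ω).card := by
          apply Finset.card_bij (fun a _ => π a)
          · intro a ha
            rw [Finset.mem_filter] at ha ⊢
            exact ⟨Finset.mem_univ _, ha.2⟩
          · intro a₁ _ a₂ _ hh
            exact π.injective hh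
          · intro b hb
            rw [Finset.mem_filter] at hb
            exact ⟨π.symm b, Finset.mem_filter.2 ⟨Finset.mem_univ _, by simpa using hb.2⟩,
              by simp⟩
        omega
    have hR : (fun ω => fun i => S i ω) ⁻¹'
        {f | (Finset.univ.filter fun i => f i < f (Fin.last n)).card < k}
        = B (Fin.last n) := rfl
    rw [hL, hR] at h
    exact h
  -- pointwise counting bound
  have hpoint : ∀ ω, (k : ℝ≥0∞) ≤ ∑ j : Fin (n+1), (B j).indicator (fun _ => 1) ω := by
    intro ω
    have hcount := counting_lemma (fun i => S i ω) hk1 (by omega : k ≤ n + 1)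
    have hsum : ∑ j : Fin (n+1), (B j).indicator (fun _ => (1:ℝ≥0∞)) ω =
        ((Finset.univ.filter fun j : Fin (n+1) =>
          (Finset.univ.filter fun i => S i ω < S j ω).card < k).card : ℝ≥0∞) := by
      rw [Finset.card_filter]
      push_cast
      apply Finset.sum_congr rfl
      intro j _
      by_cases hj : (Finset.univ.filter fun i => S i ω < S j ω).card < k
      · have hj' : ω ∈ B j := hj
        rw [Set.indicator_of_mem hj', if_pos hj]
      · have hj' : ω ∉ B j := hj
        rw [Set.indicator_of_notMem hj', if_neg hj]
    rw [hsum]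
    exact_mod_cast hcount
  -- integrate
  have hsumP : (k : ℝ≥0∞) ≤ ∑ j : Fin (n+1), P (B j) := by
    have h1 : (k : ℝ≥0∞) = ∫⁻ _, (k : ℝ≥0∞) ∂P := by
      rw [lintegral_const, measure_univ, mul_one]
    rw [h1]
    have h2 : ∫⁻ ω, (k : ℝ≥0∞) ∂P ≤ ∫⁻ ω, ∑ j : Fin (n+1),
        (B j).indicator (fun _ => 1) ω ∂P := lintegral_mono hpoint
    refine le_trans h2 (le_of_eq ?_)
    rw [lintegral_finset_sum]
    · apply Finset.sum_congr rfl
      intro j _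
      rw [lintegral_indicator (hBmeas j)]
      simp
    · intro j _
      exact Measurable.indicator measurable_const (hBmeas j)
  have hsum_const : ∑ j : Fin (n+1), P (B j) = (n+1 : ℝ≥0∞) * P (B (Fin.last n)) := by
    rw [Finset.sum_congr rfl (fun j _ => hBeq j)]
    rw [Finset.sum_const, Finset.card_univ, Fintype.card_fin, nsmul_eq_mul]
    push_cast
    ring
  rw [hsum_const] at hsumP
  -- final arithmetic
  have hgoal : {ω | S (Fin.last n) ω ≤ qhat ω} = B (Fin.last n) := by
    ext ω
    simp only [Set.mem_setOf_eq, hB]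
    exact hevent ω
  rw [hgoal]
  have hne0 : ((n:ℝ≥0∞) + 1) ≠ 0 := by simp
  have hnetop : ((n:ℝ≥0∞) + 1) ≠ ⊤ := by
    simp [ENNReal.add_eq_top]
  rw [← ENNReal.mul_le_mul_iff_left hne0 hnetop]
  calc ENNReal.ofReal (1 - α) * ((n:ℝ≥0∞) + 1)
      = ENNReal.ofReal ((1 - α) * ((n:ℝ)+1)) := by
        rw [ENNReal.ofReal_mul (by linarith)]
        congr 1
        rw [ENNReal.ofReal_add (by positivity) (by norm_num)]
        simp [ENNReal.ofReal_natCast]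
    _ ≤ (k : ℝ≥0∞) := by
        rw [← ENNReal.ofReal_natCast k]
        apply ENNReal.ofReal_le_ofReal
        have hceil := Int.le_ceil (((n:ℝ) + 1) * (1 - α))
        have hkR : ((⌈((n : ℝ) + 1) * (1 - α)⌉ : ℤ) : ℝ) = (k : ℝ) := by
          exact_mod_cast congrArg (Int.cast : ℤ → ℝ)
            (by omega : (⌈((n : ℝ) + 1) * (1 - α)⌉ : ℤ) = (k : ℤ))
        nlinarith [hceil, hkR]
    _ ≤ P (B (Fin.last n)) * ((n:ℝ≥0∞) + 1) := by
        rw [mul_comm]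
        exact hsumP
end

section
/- Coverage guarantee for split conformal prediction with a locally weighted (mean–standard deviation) score (Algorithm 1). Let 𝒳 be a measurable space, let n be a positive natural number, let α ∈ (0,1) be such that ⌈(n+1)(1−α)⌉ ≤ n, let μ : 𝒳 → ℝ and σ : 𝒳 → ℝ be measurable functions with σ(x) > 0 for every x ∈ 𝒳, and let (X₁,Y₁), …, (Xₙ,Yₙ), (X_test, Y_test) be independent and identically distributed random pairs taking values in 𝒳 × ℝ. Define calibration scores sᵢ = |Yᵢ − μ(Xᵢ)| / σ(Xᵢ) for i = 1, …, n, and let q̂ be the ⌈(n+1)(1−α)⌉-th smallest value among s₁, …, sₙ. Then ℙ( μ(X_test) − q̂·σ(X_test) ≤ Y_test ≤ μ(X_test) + q̂·σ(X_test) ) ≥ 1 − α. -/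
open MeasureTheory ProbabilityTheory
open scoped Classical

/-- strict rank of index `j` in the tuple `v`. -/
noncomputable def rankOf {m : ℕ} (v : Fin m → ℝ) (j : Fin m) : ℕ :=
  (Finset.univ.filter fun i => v i < v j).card

lemma countP_ofFn_card {n : ℕ} (w : Fin n → ℝ) (p : ℝ → Bool) :
    (List.ofFn w).countP p = (Finset.univ.filter fun i => p (w i)).card := by
  rw [List.ofFn_eq_map, List.countP_map, List.countP_eq_length_filter,
    Finset.card_filter]
  rw [show (Finset.univ : Finset (Fin n)) =
    ⟨(List.finRange n : Multiset (Fin n)), Multiset.coe_nodup.2 (List.nodup_finRange n)⟩ from rfl]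
  rw [Finset.sum_mk, Multiset.map_coe, Multiset.sum_coe]
  simp only [Function.comp_def]
  generalize (List.finRange n) = l
  induction l with
  | nil => simp
  | cons a l ih =>
    by_cases h : p (w a) <;> simp [List.filter_cons, h, ih, Nat.add_comm]

lemma le_kthSmallest_of_countP_lt (l : List ℝ) (t : ℝ) (k : ℕ)
    (hk1 : 1 ≤ k) (hkl : k ≤ l.length)
    (h : l.countP (fun a => decide (a < t)) < k) : t ≤ kthSmallest l k := by
  set l' := l.mergeSort (fun a b => a ≤ b) with hl'
  have hperm : l'.Perm l := List.mergeSort_perm l _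
  have hlen : l'.length = l.length := hperm.length_eq
  have hsorted : List.Pairwise (fun a b : ℝ => decide (a ≤ b) = true) l' :=
    List.pairwise_mergeSort (by intro a b c hab hbc; simp at *; linarith)
      (by intro a b; simpa using le_total a b) l
  have hk1' : k - 1 < l'.length := by omega
  have hval : kthSmallest l k = l'[k-1] := by
    rw [kthSmallest, List.getD_eq_getElem _ _ hk1']
  by_contra hc
  push_neg at hc
  rw [hval] at hc
  have hcount : k ≤ l'.countP (fun a => decide (a < t)) := by
    have h1 : (l'.take k).length = k := by rw [List.length_take]; omega
    have h2 : (l'.take k).countP (fun a => decide (a < t)) = k := by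
      rw [List.countP_eq_length.2, h1]
      intro a ha
      obtain ⟨i, hi, rfl⟩ := List.mem_iff_getElem.1 ha
      have hia : i < k := by
        have := hi; rw [List.length_take] at this; omega
      rw [List.getElem_take]
      have hle : l'[i] ≤ l'[k-1] := by
        rcases Nat.lt_or_ge i (k-1) with h' | h'
        · have := (List.pairwise_iff_getElem.1 hsorted) i (k-1)
            (by omega) hk1' h'
          simpa using this
        · have hik : i = k - 1 := by omega
          subst hik; rfl
      simp only [decide_eq_true_eq]
      linarith
    have h3 : l'.countP (fun a => decide (a < t)) =
        (l'.take k).countP (fun a => decide (a < t)) +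
        (l'.drop k).countP (fun a => decide (a < t)) := by
      conv_lhs => rw [← List.take_append_drop k l']
      rw [List.countP_append]
    omega
  rw [hperm.countP_eq] at hcount; omega

lemma rankOf_comp_perm {m : ℕ} (v : Fin m → ℝ) (e : Equiv.Perm (Fin m)) (j : Fin m) :
    rankOf (v ∘ e) j = rankOf v (e j) := by
  unfold rankOf
  rw [← Finset.card_image_of_injective
    (Finset.univ.filter fun i => (v ∘ e) i < (v ∘ e) j) e.injective]
  congr 1
  ext x
  simp only [Finset.mem_image, Finset.mem_filter, Finset.mem_univ, true_and,
    Function.comp_apply]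
  constructor
  · rintro ⟨a, ha, rfl⟩; exact ha
  · intro hx; exact ⟨e.symm x, by simpa using hx, by simp⟩

lemma card_rankOf_lt {m k : ℕ} (hk : k ≤ m) (v : Fin m → ℝ) :
    k ≤ (Finset.univ.filter fun j => rankOf v j < k).card := by
  set σ := Tuple.sort v with hσ
  have hmono := Tuple.monotone_sort v
  have key : ∀ j : Fin m, rankOf v (σ j) ≤ (j : ℕ) := by
    intro j
    rw [← rankOf_comp_perm v σ j]
    have hsub : (Finset.univ.filter fun i => (v ∘ σ) i < (v ∘ σ) j) ⊆ Finset.Iio j := by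
      intro i hi
      simp only [Finset.mem_filter, Finset.mem_univ, true_and] at hi
      simp only [Finset.mem_Iio]
      by_contra hcon
      push_neg at hcon
      exact absurd (hmono hcon) (not_le.2 hi)
    calc rankOf (v ∘ σ) j ≤ (Finset.Iio j).card := Finset.card_le_card hsub
      _ = (j : ℕ) := Fin.card_Iio j
  have hinj : Function.Injective (fun i : Fin k => σ (Fin.castLE hk i)) :=
    σ.injective.comp (Fin.castLE_injective hk)
  have hsub : (Finset.univ.image fun i : Fin k => σ (Fin.castLE hk i)) ⊆
      Finset.univ.filter fun j => rankOf v j < k := by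
    intro x hx
    simp only [Finset.mem_image, Finset.mem_univ, true_and] at hx
    obtain ⟨i, rfl⟩ := hx
    simp only [Finset.mem_filter, Finset.mem_univ, true_and]
    calc rankOf v (σ (Fin.castLE hk i)) ≤ ((Fin.castLE hk i : Fin m) : ℕ) := key _
      _ < k := by simpa using i.isLt
  calc k = (Finset.univ.image fun i : Fin k => σ (Fin.castLE hk i)).card := by
        rw [Finset.card_image_of_injective _ hinj, Finset.card_univ, Fintype.card_fin]
    _ ≤ _ := Finset.card_le_card hsub

lemma le_kthSmallest_of_rank_lt {n k : ℕ} (hk1 : 1 ≤ k) (hkn : k ≤ n)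
    (v : Fin (n+1) → ℝ) (h : rankOf v (Fin.last n) < k) :
    v (Fin.last n) ≤ kthSmallest (List.ofFn fun i : Fin n => v i.castSucc) k := by
  apply le_kthSmallest_of_countP_lt _ _ _ hk1 (by simp [List.length_ofFn, hkn])
  rw [countP_ofFn_card]
  have hle : (Finset.univ.filter fun i : Fin n =>
      decide (v i.castSucc < v (Fin.last n)) = true).card ≤ rankOf v (Fin.last n) := by
    unfold rankOf
    rw [← Finset.card_image_of_injective
      (Finset.univ.filter fun i : Fin n => decide (v i.castSucc < v (Fin.last n)) = true)
      (Fin.castSucc_injective n)]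
    apply Finset.card_le_card
    intro x hx
    simp only [Finset.mem_image, Finset.mem_filter, Finset.mem_univ, true_and,
      decide_eq_true_eq] at hx ⊢
    obtain ⟨a, ha, rfl⟩ := hx
    exact ha
  omega

/-- **Coverage guarantee for split conformal prediction with a locally weighted
(mean–standard deviation) score (Algorithm 1).**
Given i.i.d. pairs `(X₁,Y₁), …, (Xₙ,Yₙ), (X_test, Y_test)` in `𝒳 × ℝ`, measurable
`μ, σ : 𝒳 → ℝ` with `σ > 0`, calibration scores `sᵢ = |Yᵢ - μ(Xᵢ)|/σ(Xᵢ)`, and `q̂` the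
`⌈(n+1)(1-α)⌉`-th smallest calibration score, we have
`ℙ(μ(X_test) - q̂·σ(X_test) ≤ Y_test ≤ μ(X_test) + q̂·σ(X_test)) ≥ 1 - α`. -/
theorem conformal_locally_weighted_coverage
    {Ω : Type*} [MeasurableSpace Ω] (P : Measure Ω) [IsProbabilityMeasure P]
    {𝒳 : Type*} [MeasurableSpace 𝒳]
    (n : ℕ) (hn : 0 < n) (α : ℝ) (hα0 : 0 < α) (hα1 : α < 1)
    (hk : ⌈((n : ℝ) + 1) * (1 - α)⌉ ≤ (n : ℤ))
    (μ σ : 𝒳 → ℝ) (hμ : Measurable μ) (hσ : Measurable σ) (hσpos : ∀ x, 0 < σ x)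
    (Z : Fin (n + 1) → Ω → 𝒳 × ℝ)
    (hZmeas : ∀ i, Measurable (Z i))
    (hindep : iIndepFun Z P)
    (hident : ∀ i j, IdentDistrib (Z i) (Z j) P P)
    (qhat : Ω → ℝ)
    (hqhat : ∀ ω, qhat ω =
      kthSmallest
        (List.ofFn (fun i : Fin n =>
          |(Z i.castSucc ω).2 - μ (Z i.castSucc ω).1| / σ (Z i.castSucc ω).1))
        (⌈((n : ℝ) + 1) * (1 - α)⌉.toNat)) :
    ENNReal.ofReal (1 - α) ≤
      P {ω | μ (Z (Fin.last n) ω).1 - qhat ω * σ (Z (Fin.last n) ω).1 ≤ (Z (Fin.last n) ω).2 ∧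
             (Z (Fin.last n) ω).2 ≤ μ (Z (Fin.last n) ω).1 + qhat ω * σ (Z (Fin.last n) ω).1} := by
  -- the score function and score random variables
  set k : ℕ := ⌈((n : ℝ) + 1) * (1 - α)⌉.toNat with hkdef
  have hpos : (0:ℝ) < ((n : ℝ) + 1) * (1 - α) :=
    mul_pos (by positivity) (by linarith)
  have hceil_pos : (0:ℤ) < ⌈((n : ℝ) + 1) * (1 - α)⌉ := Int.ceil_pos.2 hpos
  have hk1 : 1 ≤ k := by
    rw [hkdef]
    exact (Int.le_toNat hceil_pos.le).2 hceil_pos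
  have hkn : k ≤ n := by
    rw [hkdef]
    exact Int.toNat_le.2 hk
  have hknat : (k : ℤ) = ⌈((n : ℝ) + 1) * (1 - α)⌉ := by
    rw [hkdef]; exact Int.toNat_of_nonneg hceil_pos.le
  have hkr : ((n : ℝ) + 1) * (1 - α) ≤ (k : ℝ) := by
    have h1 := Int.le_ceil (((n : ℝ) + 1) * (1 - α))
    rw [← hknat] at h1
    exact_mod_cast h1
  set g : 𝒳 × ℝ → ℝ := fun p => |p.2 - μ p.1| / σ p.1 with hgdef
  have hg : Measurable g :=
    ((measurable_snd.sub (hμ.comp measurable_fst)).abs).div (hσ.comp measurable_fst)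
  set S : Fin (n+1) → Ω → ℝ := fun i ω => g (Z i ω) with hSdef
  have hS : ∀ i, Measurable (S i) := fun i => hg.comp (hZmeas i)
  have hindepS : iIndepFun S P :=
    hindep.comp (fun _ => g) (fun _ => hg)
  set ν : Measure ℝ := P.map (S 0) with hνdef
  have hν : ∀ i, P.map (S i) = ν := fun i => ((hident i 0).comp hg).map_eq
  have hνprob : IsProbabilityMeasure ν := Measure.isProbabilityMeasure_map (hS 0).aemeasurable
  -- the joint law is the product measure, for any permutation of indices
  have hmap : ∀ e : Equiv.Perm (Fin (n+1)),
      Measure.pi (fun _ => ν) = P.map (fun ω => fun i => S (e i) ω) := by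
    intro e
    apply Measure.pi_eq
    intro B hB
    have hTe : Measurable (fun ω => fun i => S (e i) ω) :=
      measurable_pi_lambda _ (fun i => hS (e i))
    rw [Measure.map_apply hTe (MeasurableSet.univ_pi hB)]
    have hset : (fun ω => fun i => S (e i) ω) ⁻¹' Set.pi Set.univ B =
        ⋂ i ∈ Finset.univ, S i ⁻¹' (B (e.symm i)) := by
      ext ω
      simp only [Set.mem_preimage, Set.mem_pi, Set.mem_univ, true_implies,
        Finset.mem_univ, Set.mem_iInter, Set.mem_preimage, true_implies]
      constructor
      · intro h i
        have := h (e.symm i)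
        rwa [Equiv.apply_symm_apply] at this
      · intro h i
        have := h (e i)
        rwa [Equiv.symm_apply_apply] at this
    rw [hset, hindepS.measure_inter_preimage_eq_mul Finset.univ
      (fun i _ => hB (e.symm i))]
    have hval : ∀ i, P (S i ⁻¹' B (e.symm i)) = ν (B (e.symm i)) := fun i => by
      rw [← hν i, Measure.map_apply (hS i) (hB _)]
    simp_rw [hval]
    exact Equiv.prod_comp e.symm (fun i => ν (B i))
  -- rank events
  set T : Ω → (Fin (n+1) → ℝ) := fun ω i => S i ω with hTdef
  have hT : Measurable T := measurable_pi_lambda _ hS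
  set Bset : Fin (n+1) → Set (Fin (n+1) → ℝ) := fun j => {v | rankOf v j < k} with hBdef
  have hrank_meas : ∀ j, Measurable fun v : Fin (n+1) → ℝ => rankOf v j := by
    intro j
    unfold rankOf
    simp_rw [Finset.card_filter]
    apply Finset.measurable_sum
    intro i _
    exact Measurable.ite
      (measurableSet_lt (measurable_pi_apply i) (measurable_pi_apply j))
      measurable_const measurable_const
  have hBmeas : ∀ j, MeasurableSet (Bset j) := fun j =>
    (hrank_meas j) (measurableSet_Iio (a := k))
  set A : Fin (n+1) → Set Ω := fun j => T ⁻¹' Bset j with hAdef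
  have hAmeas : ∀ j, MeasurableSet (A j) := fun j => hT (hBmeas j)
  -- exchangeability: all rank events have the same probability
  have hPA : ∀ j, P (A j) = P (A (Fin.last n)) := by
    intro j
    set e : Equiv.Perm (Fin (n+1)) := Equiv.swap j (Fin.last n) with hedef
    have hrefl : Measure.pi (fun _ => ν) = P.map T := by
      have := hmap (Equiv.refl _)
      rwa [show (fun ω => fun i => S ((Equiv.refl (Fin (n+1))) i) ω) = T from rfl] at this
    have h1 : P (A j) = Measure.pi (fun _ => ν) (Bset j) := by
      rw [hrefl, Measure.map_apply hT (hBmeas j)]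
    have h2 : P (A (Fin.last n)) = Measure.pi (fun _ => ν) (Bset (Fin.last n)) := by
      rw [hrefl, Measure.map_apply hT (hBmeas _)]
    have hTe : Measurable (fun ω => fun i => S (e i) ω) :=
      measurable_pi_lambda _ (fun i => hS (e i))
    have h3 : Measure.pi (fun _ => ν) (Bset (Fin.last n)) =
        P ((fun ω => fun i => S (e i) ω) ⁻¹' Bset (Fin.last n)) := by
      rw [hmap e, Measure.map_apply hTe (hBmeas _)]
    have h4 : (fun ω => fun i => S (e i) ω) ⁻¹' Bset (Fin.last n) = A j := by
      ext ω
      simp only [Set.mem_preimage, hBdef, Set.mem_setOf_eq, hAdef]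
      have : (fun i => S (e i) ω) = (T ω) ∘ e := rfl
      rw [this, rankOf_comp_perm (T ω) e (Fin.last n)]
      have : e (Fin.last n) = j := Equiv.swap_apply_right j (Fin.last n)
      rw [this]
    rw [h1, h2, h3, h4]
    exact h1.symm
  -- counting bound: ∑ P(A j) ≥ k
  have hsum : (k : ENNReal) ≤ ∑ j : Fin (n+1), P (A j) := by
    have hpt : ∀ ω, (k : ENNReal) ≤ ∑ j : Fin (n+1), (A j).indicator (1 : Ω → ENNReal) ω := by
      intro ω
      have hcard := card_rankOf_lt (show k ≤ n+1 by omega) (fun i => S i ω)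
      have heq : ∑ j : Fin (n+1), (A j).indicator (1 : Ω → ENNReal) ω =
          ((Finset.univ.filter fun j : Fin (n+1) =>
            rankOf (fun i => S i ω) j < k).card : ENNReal) := by
        rw [← Finset.sum_boole]
        apply Finset.sum_congr rfl
        intro j _
        rw [Set.indicator_apply]
        split_ifs with h1 h2 h3
        · rfl
        · exact absurd h1 h2
        · exact absurd h3 h1
        · rfl
      rw [heq]
      exact_mod_cast hcard
    calc (k : ENNReal) = ∫⁻ _, (k : ENNReal) ∂P := by simp
      _ ≤ ∫⁻ ω, ∑ j : Fin (n+1), (A j).indicator (1 : Ω → ENNReal) ω ∂P :=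
          lintegral_mono hpt
      _ = ∑ j : Fin (n+1), ∫⁻ ω, (A j).indicator (1 : Ω → ENNReal) ω ∂P :=
          lintegral_finset_sum _ (fun j _ => measurable_one.indicator (hAmeas j))
      _ = ∑ j : Fin (n+1), P (A j) := by
          apply Finset.sum_congr rfl
          intro j _
          rw [lintegral_indicator (hAmeas j) 1]
          simp
  -- so P(A last) ≥ (1-α)
  have hlast : ENNReal.ofReal (1 - α) ≤ P (A (Fin.last n)) := by
    have h5 : (k : ENNReal) ≤ ((n : ENNReal) + 1) * P (A (Fin.last n)) := by
      calc (k : ENNReal) ≤ ∑ j : Fin (n+1), P (A j) := hsum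
        _ = ∑ _j : Fin (n+1), P (A (Fin.last n)) := Finset.sum_congr rfl (fun j _ => hPA j)
        _ = ((n : ENNReal) + 1) * P (A (Fin.last n)) := by
            rw [Finset.sum_const, Finset.card_univ, Fintype.card_fin]
            simp [nsmul_eq_mul]
    have h6 : ((n : ENNReal) + 1) * ENNReal.ofReal (1 - α) ≤
        ((n : ENNReal) + 1) * P (A (Fin.last n)) := by
      calc ((n : ENNReal) + 1) * ENNReal.ofReal (1 - α)
          = ENNReal.ofReal (((n : ℝ) + 1) * (1 - α)) := by
            rw [ENNReal.ofReal_mul (by positivity)]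
            congr 1
            rw [ENNReal.ofReal_add (by positivity) zero_le_one]
            simp
        _ ≤ ENNReal.ofReal (k : ℝ) := ENNReal.ofReal_le_ofReal hkr
        _ = (k : ENNReal) := ENNReal.ofReal_natCast k
        _ ≤ _ := h5
    have hne0 : ((n : ENNReal) + 1) ≠ 0 := by simp
    have hnetop : ((n : ENNReal) + 1) ≠ ⊤ := by simp [ENNReal.natCast_ne_top]
    exact (ENNReal.mul_le_mul_iff_right hne0 hnetop).1 h6
  -- the coverage event contains the rank event
  refine le_trans hlast (measure_mono ?_)
  intro ω hω
  have hrank : rankOf (T ω) (Fin.last n) < k := hω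
  have hq := le_kthSmallest_of_rank_lt hk1 hkn (T ω) hrank
  have hqeq : kthSmallest (List.ofFn fun i : Fin n => (T ω) i.castSucc) k = qhat ω := by
    rw [hqhat ω]
  rw [hqeq] at hq
  -- hq : S (Fin.last n) ω ≤ qhat ω
  have hσx := hσpos (Z (Fin.last n) ω).1
  have habs : |(Z (Fin.last n) ω).2 - μ (Z (Fin.last n) ω).1| ≤
      qhat ω * σ (Z (Fin.last n) ω).1 := by
    have := (div_le_iff₀ hσx).1 hq
    linarith [this]
  have h7 := abs_le.1 habs
  exact ⟨by linarith [h7.1], by linarith [h7.2]⟩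
end
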